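/- For positive reals a and b and suitable f, the Liouville integral identity holds: ∫₀^∞ f(a·x + b/x) · x^(−1/2) dx = a^(−1/2) ∫₀^∞ f(2·√(a·b) + y) · y^(−1/2) dy. -/

import Mathlib

open MeasureTheory Real Set

-- image of squaring
lemma sq_image_Ioi : (fun t : ℝ => t ^ 2) '' Ioi 0 = Ioi 0 := by
  ext x
  constructor
  · rintro ⟨t, ht, rfl⟩; exact pow_pos (mem_Ioi.1 ht) 2
  · intro hx; exact ⟨Real.sqrt x, Real.sqrt_pos.2 hx, Real.sq_sqrt hx.le⟩

lemma sq_injOn : InjOn (fun t : ℝ => t ^ 2) (Ioi 0) := by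
  intro x hx y hy h
  have := Real.sqrt_sq (le_of_lt hx)
  have := Real.sqrt_sq (le_of_lt hy)
  simp only at h
  nlinarith [(mem_Ioi.1 hx).le, (mem_Ioi.1 hy).le, sq_nonneg (x - y), sq_nonneg (x + y)]

lemma inv_image_Ioi {c : ℝ} (hc : 0 < c) :
    (fun t : ℝ => c * t⁻¹) '' Ioi 0 = Ioi 0 := by
  ext x
  constructor
  · rintro ⟨t, ht, rfl⟩; exact mul_pos hc (inv_pos.2 ht)
  · intro hx
    refine ⟨c * x⁻¹, mul_pos hc (inv_pos.2 hx), ?_⟩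
    field_simp

theorem liouville_identity (a b : ℝ) (ha : 0 < a) (hb : 0 < b)
    (f : ℝ → ℝ) (hf_meas : Measurable f)
    (h1 : IntegrableOn (fun x => f (a * x + b / x) * x ^ (-(1:ℝ)/2)) (Ioi 0))
    (h2 : IntegrableOn (fun y => f (2 * Real.sqrt (a * b) + y) * y ^ (-(1:ℝ)/2)) (Ioi 0)) :
    ∫ x in Ioi (0 : ℝ), f (a * x + b / x) * x ^ (-(1:ℝ)/2)
      = a ^ (-(1:ℝ)/2) * ∫ y in Ioi (0 : ℝ), f (2 * Real.sqrt (a * b) + y) * y ^ (-(1:ℝ)/2) := by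
  set sa := Real.sqrt a with hsa
  set sb := Real.sqrt b with hsb
  have hsa0 : 0 < sa := Real.sqrt_pos.2 ha
  have hsb0 : 0 < sb := Real.sqrt_pos.2 hb
  have hsa2 : sa ^ 2 = a := Real.sq_sqrt ha.le
  have hsb2 : sb ^ 2 = b := Real.sq_sqrt hb.le
  have hab : Real.sqrt (a * b) = sa * sb := Real.sqrt_mul ha.le b
  set c := sb / sa with hc
  have hc0 : 0 < c := div_pos hsb0 hsa0
  set G : ℝ → ℝ := fun t => f (a * t ^ 2 + b / t ^ 2) with hG
  -- derivative facts
  have hderiv_sq : ∀ t ∈ Ioi (0:ℝ), HasDerivWithinAt (fun t : ℝ => t ^ 2) (2 * t) (Ioi 0) t := by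
    intro t _
    simpa using (hasDerivAt_pow 2 t).hasDerivWithinAt
  -- rpow fact: for t > 0, (t^2) ^ (-(1:ℝ)/2) = t⁻¹
  have hrpow : ∀ t : ℝ, 0 < t → ((t ^ 2 : ℝ)) ^ (-(1:ℝ)/2) = t⁻¹ := by
    intro t ht
    rw [← Real.rpow_natCast t 2, ← Real.rpow_mul ht.le]
    norm_num
    exact Real.rpow_neg_one t
  -- Step A : LHS = 2 ∫ G
  have stepA : ∫ x in Ioi (0:ℝ), f (a * x + b / x) * x ^ (-(1:ℝ)/2)
      = 2 * ∫ t in Ioi (0:ℝ), G t := by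
    have := integral_image_eq_integral_abs_deriv_smul measurableSet_Ioi hderiv_sq sq_injOn
      (fun x => f (a * x + b / x) * x ^ (-(1:ℝ)/2))
    rw [sq_image_Ioi] at this
    rw [this, ← integral_const_mul]
    refine setIntegral_congr_fun measurableSet_Ioi (fun t ht => ?_)
    have ht : (0:ℝ) < t := ht
    have h2t : |2 * t| = 2 * t := abs_of_pos (by linarith)
    rw [smul_eq_mul, h2t, hrpow t ht, hG]
    have : a * t ^ 2 + b / t ^ 2 = a * t ^ 2 + b / t ^ 2 := rfl
    field_simp
  -- integrability of G
  have hGint : IntegrableOn G (Ioi 0) := by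
    have := (integrableOn_image_iff_integrableOn_abs_deriv_smul measurableSet_Ioi hderiv_sq
      sq_injOn (fun x => f (a * x + b / x) * x ^ (-(1:ℝ)/2))).1 (by rwa [sq_image_Ioi])
    have h2G : IntegrableOn (fun t => 2 * G t) (Ioi 0) := by
      refine this.congr_fun (fun t ht => ?_) measurableSet_Ioi
      have ht : (0:ℝ) < t := ht
      beta_reduce
      rw [smul_eq_mul, abs_of_pos (by linarith : (0:ℝ) < 2 * t), hrpow t ht, hG]
      field_simp
    have h3 : IntegrableOn (fun t => (1/2 : ℝ) * (2 * G t)) (Ioi 0) := h2G.const_mul _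
    refine h3.congr_fun (fun t _ => ?_) measurableSet_Ioi
    ring
  -- the inversion substitution : ∫ G = ∫ (c/t²) G
  have hderiv_inv : ∀ t ∈ Ioi (0:ℝ),
      HasDerivWithinAt (fun t : ℝ => c * t⁻¹) (c * -((t ^ 2)⁻¹)) (Ioi 0) t := by
    intro t ht
    exact ((hasDerivAt_inv (ne_of_gt ht)).const_mul c).hasDerivWithinAt
  have hinv_injOn : InjOn (fun t : ℝ => c * t⁻¹) (Ioi 0) := by
    intro x hx y hy h
    have hx : (0:ℝ) < x := hx
    have hy : (0:ℝ) < y := hy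
    simp only at h
    field_simp at h
    rcases h with h | h
    · rfl
  have hGinv : ∀ t : ℝ, 0 < t → G (c * t⁻¹) = G t := by
    intro t ht
    simp only [hG]
    congr 1
    rw [hc]
    rw [← hsa2, ← hsb2]
    field_simp
    ring
  have stepB : ∫ t in Ioi (0:ℝ), G t = ∫ t in Ioi (0:ℝ), c * (t ^ 2)⁻¹ * G t := by
    have := integral_image_eq_integral_abs_deriv_smul measurableSet_Ioi hderiv_inv hinv_injOn G
    rw [inv_image_Ioi hc0] at this
    rw [this]
    refine setIntegral_congr_fun measurableSet_Ioi (fun t ht => ?_)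
    have ht : (0:ℝ) < t := ht
    rw [smul_eq_mul, hGinv t ht]
    have : |c * -((t ^ 2)⁻¹)| = c * (t ^ 2)⁻¹ := by
      rw [abs_mul, abs_neg, abs_inv, abs_of_pos hc0, abs_of_pos (by positivity : (0:ℝ) < t ^ 2)]
    rw [this]
  have hGinv_int : IntegrableOn (fun t => c * (t ^ 2)⁻¹ * G t) (Ioi 0) := by
    have := (integrableOn_image_iff_integrableOn_abs_deriv_smul measurableSet_Ioi hderiv_inv
      hinv_injOn G).1 (by rwa [inv_image_Ioi hc0])
    refine this.congr_fun (fun t ht => ?_) measurableSet_Ioi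
    have ht : (0:ℝ) < t := ht
    beta_reduce
    rw [smul_eq_mul, hGinv t ht, abs_mul, abs_neg, abs_inv, abs_of_pos hc0,
      abs_of_pos (by positivity : (0:ℝ) < t ^ 2)]
  -- the main substitution χ t = sa t - sb/t
  have hderiv_chi : ∀ t ∈ Ioi (0:ℝ),
      HasDerivWithinAt (fun t : ℝ => sa * t - sb * t⁻¹) (sa + sb * (t ^ 2)⁻¹) (Ioi 0) t := by
    intro t ht
    have h : HasDerivWithinAt (fun t : ℝ => sa * t - sb * t⁻¹) (sa * 1 - sb * -(t ^ 2)⁻¹) (Ioi 0) t :=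
      (((hasDerivAt_id t).const_mul sa).sub
        ((hasDerivAt_inv (ne_of_gt ht)).const_mul sb)).hasDerivWithinAt
    have : sa + sb * (t ^ 2)⁻¹ = sa * 1 - sb * -(t ^ 2)⁻¹ := by ring
    rw [this]
    exact h
  have hchi_injOn : InjOn (fun t : ℝ => sa * t - sb * t⁻¹) (Ioi 0) := by
    have : StrictMonoOn (fun t : ℝ => sa * t - sb * t⁻¹) (Ioi 0) := by
      intro x hx y hy hxy
      have hx : (0:ℝ) < x := hx
      have hy : (0:ℝ) < y := hy
      have h1 : sa * x < sa * y := by nlinarith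
      have h2 : sb * y⁻¹ < sb * x⁻¹ := by
        apply mul_lt_mul_of_pos_left _ hsb0
        exact inv_strictAnti₀ hx hxy
      simp only
      linarith
    exact this.injOn
  have hchi_image : (fun t : ℝ => sa * t - sb * t⁻¹) '' Ioi 0 = univ := by
    apply eq_univ_of_forall
    intro u
    set r := Real.sqrt (u ^ 2 + 4 * sa * sb) with hr
    have hr2 : r ^ 2 = u ^ 2 + 4 * sa * sb := Real.sq_sqrt (by positivity)
    have hr0 : 0 ≤ r := Real.sqrt_nonneg _
    have hru : -u < r := by nlinarith [abs_nonneg u, sq_abs u, neg_abs_le u]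
    set t := (u + r) / (2 * sa) with htdef
    have ht0 : 0 < t := by
      apply div_pos _ (by linarith)
      linarith
    refine ⟨t, ht0, ?_⟩
    simp only
    have hur : u + r ≠ 0 := by linarith
    rw [htdef]
    field_simp
    linear_combination hr2
  -- step D : ∫_ℝ f (2√(ab) + u²) = 2 sa ∫ G
  have hptD : ∀ t : ℝ, 0 < t →
      |sa + sb * (t ^ 2)⁻¹| • f (2 * Real.sqrt (a * b) + (sa * t - sb * t⁻¹) ^ 2)
        = sa * G t + sb / c * (c * (t ^ 2)⁻¹ * G t) := by
    intro t ht
    have habs : |sa + sb * (t ^ 2)⁻¹| = sa + sb * (t ^ 2)⁻¹ := abs_of_pos (by positivity)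
    have harg : 2 * Real.sqrt (a * b) + (sa * t - sb * t⁻¹) ^ 2 = a * t ^ 2 + b / t ^ 2 := by
      rw [hab, ← hsa2, ← hsb2]
      field_simp
      ring
    rw [smul_eq_mul, habs, harg, hG]
    field_simp
  have stepD : ∫ u : ℝ, f (2 * Real.sqrt (a * b) + u ^ 2)
      = 2 * sa * ∫ t in Ioi (0:ℝ), G t := by
    have := integral_image_eq_integral_abs_deriv_smul measurableSet_Ioi hderiv_chi hchi_injOn
      (fun u => f (2 * Real.sqrt (a * b) + u ^ 2))
    rw [hchi_image] at this
    rw [show (∫ u : ℝ, f (2 * Real.sqrt (a * b) + u ^ 2))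
        = ∫ u in (univ : Set ℝ), f (2 * Real.sqrt (a * b) + u ^ 2) by simp [Measure.restrict_univ]]
    rw [this]
    rw [setIntegral_congr_fun measurableSet_Ioi (fun t ht => hptD t ht)]
    rw [integral_add (hGint.const_mul sa) (hGinv_int.const_mul (sb / c))]
    rw [integral_const_mul, integral_const_mul, ← stepB]
    have : sb / c = sa := by rw [hc]; field_simp
    rw [this]
    ring
  -- step E : RHS integral = ∫_ℝ f(2√(ab)+u²)
  have stepE : ∫ y in Ioi (0:ℝ), f (2 * Real.sqrt (a * b) + y) * y ^ (-(1:ℝ)/2)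
      = ∫ u : ℝ, f (2 * Real.sqrt (a * b) + u ^ 2) := by
    have himg := integral_image_eq_integral_abs_deriv_smul measurableSet_Ioi hderiv_sq sq_injOn
      (fun y => f (2 * Real.sqrt (a * b) + y) * y ^ (-(1:ℝ)/2))
    rw [sq_image_Ioi] at himg
    rw [himg]
    have habs : ∫ u : ℝ, f (2 * Real.sqrt (a * b) + u ^ 2)
        = 2 * ∫ u in Ioi (0:ℝ), f (2 * Real.sqrt (a * b) + u ^ 2) := by
      have : ∀ u : ℝ, f (2 * Real.sqrt (a * b) + u ^ 2)
          = (fun v => f (2 * Real.sqrt (a * b) + v ^ 2)) |u| := by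
        intro u; simp [sq_abs]
      rw [show (∫ u : ℝ, f (2 * Real.sqrt (a * b) + u ^ 2))
          = ∫ u : ℝ, (fun v => f (2 * Real.sqrt (a * b) + v ^ 2)) |u| by
            exact integral_congr_ae (Filter.Eventually.of_forall this)]
      exact integral_comp_abs (f := fun v => f (2 * Real.sqrt (a * b) + v ^ 2))
    rw [habs, ← integral_const_mul]
    refine setIntegral_congr_fun measurableSet_Ioi (fun t ht => ?_)
    have ht : (0:ℝ) < t := ht
    rw [smul_eq_mul, abs_of_pos (by linarith : (0:ℝ) < 2 * t), hrpow t ht]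
    field_simp
  -- finish
  have hfinal : a ^ (-(1:ℝ)/2) = sa⁻¹ := by
    rw [hsa, Real.sqrt_eq_rpow, ← Real.rpow_neg_one (a ^ ((1:ℝ)/2)), ← Real.rpow_mul ha.le]
    norm_num
  rw [stepA, stepE, stepD, hfinal]
  field_simp
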